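/- arXiv:2106.06708 — 3 statements merged into one kernel-verified Lean document; each statement's English description precedes it below -/
import Mathlib

section
/- For q ∈ (0,1), the series ∑_{j=0}^{∞} (−1)ʲ binom(q,j) converges to 0. -/
/-- Generalized binomial coefficient binom(q, j) = ∏_{i=0}^{j−1} (q − i) / j!. -/
noncomputable def genBinom (q : ℝ) (j : ℕ) : ℝ :=
  (∏ i ∈ Finset.range j, (q - i)) / (Nat.factorial j)

noncomputable def glcP (q : ℝ) (n : ℕ) : ℝ :=
  ∏ i ∈ Finset.range n, (((i : ℝ) + 1 - q) / ((i : ℝ) + 1))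

lemma glc_fact (n : ℕ) : (Nat.factorial (n + 1) : ℝ)
    = ((n : ℝ) + 1) * ∏ i ∈ Finset.range n, ((i : ℝ) + 1) := by
  have := Finset.prod_range_add_one_eq_factorial n
  rw [Nat.factorial_succ]
  push_cast [← this]
  ring

lemma glc_key (q : ℝ) (n : ℕ) :
    (-1) ^ (n + 1) * genBinom q (n + 1) = (-q / ((n : ℝ) + 1)) * glcP q n := by
  unfold genBinom glcP
  rw [Finset.prod_range_succ' (fun i => (q - (i : ℝ)))]
  push_cast
  have h1 : (∏ i ∈ Finset.range n, (q - ((i : ℝ) + 1)))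
      = (-1 : ℝ) ^ n * ∏ i ∈ Finset.range n, ((i : ℝ) + 1 - q) := by
    rw [show ((-1 : ℝ) ^ n) = ∏ _i ∈ Finset.range n, (-1 : ℝ) by
      rw [Finset.prod_const, Finset.card_range], ← Finset.prod_mul_distrib]
    exact Finset.prod_congr rfl (fun i _ => by ring)
  have h2 : ∏ i ∈ Finset.range n, (((i : ℝ) + 1 - q) / ((i : ℝ) + 1))
      = (∏ i ∈ Finset.range n, ((i : ℝ) + 1 - q)) / (∏ i ∈ Finset.range n, ((i : ℝ) + 1)) :=
    Finset.prod_div_distrib _ _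
  have hsign : (-1 : ℝ) ^ (n + 1) * (∏ i ∈ Finset.range n, (q - ((i : ℝ) + 1)))
      = -∏ i ∈ Finset.range n, ((i : ℝ) + 1 - q) := by
    rw [h1, ← mul_assoc, ← pow_add,
      (Odd.neg_one_pow (n := n + 1 + n) ⟨n, by ring⟩ : ((-1 : ℝ) ^ (n + 1 + n)) = -1)]
    ring
  have hBpos : (0 : ℝ) < ∏ i ∈ Finset.range n, ((i : ℝ) + 1) :=
    Finset.prod_pos (fun i _ => by positivity)
  have hn1 : ((n : ℝ) + 1) ≠ 0 := by positivity
  rw [glc_fact, h2, show (-1 : ℝ) ^ (n + 1) *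
      ((∏ i ∈ Finset.range n, (q - ((i : ℝ) + 1))) * (q - 0) /
        (((n : ℝ) + 1) * ∏ i ∈ Finset.range n, ((i : ℝ) + 1)))
      = ((-1 : ℝ) ^ (n + 1) * (∏ i ∈ Finset.range n, (q - ((i : ℝ) + 1)))) * (q - 0) /
        (((n : ℝ) + 1) * ∏ i ∈ Finset.range n, ((i : ℝ) + 1)) from by ring, hsign]
  field_simp
  ring

lemma glc_partial (q : ℝ) (n : ℕ) :
    ∑ j ∈ Finset.range (n + 1), (-1 : ℝ) ^ j * genBinom q j = glcP q n := by
  induction n with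
  | zero => simp [genBinom, glcP]
  | succ m ih =>
    rw [Finset.sum_range_succ, ih, glc_key q m]
    unfold glcP
    rw [Finset.prod_range_succ]
    have h : ((m : ℝ) + 1) ≠ 0 := by positivity
    field_simp
    ring

/-- for q ∈ (0,1), ∑_{j=0}^{∞} (−1)ʲ binom(q,j) = 0. -/
theorem glc_sum_eq_zero (q : ℝ) (hq0 : 0 < q) (hq1 : q < 1) :
    HasSum (fun j : ℕ => (-1) ^ j * genBinom q j) 0 := by
  set a : ℕ → ℝ := fun j => (-1) ^ j * genBinom q j with ha
  have hiq : ∀ i : ℕ, q < (i : ℝ) + 1 := fun i =>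
    lt_of_lt_of_le hq1 (by linarith [Nat.cast_nonneg (α := ℝ) i])
  have hPnonneg : ∀ n, 0 ≤ glcP q n := by
    intro n
    apply Finset.prod_nonneg
    intro i _
    have := hiq i
    apply div_nonneg <;> [linarith; positivity]
  -- glcP q n → 0
  have hPtend : Filter.Tendsto (glcP q) Filter.atTop (nhds 0) := by
    have hle : ∀ n, glcP q n ≤ Real.exp (-q * ∑ i ∈ Finset.range n, (1 / ((i : ℝ) + 1))) := by
      intro n
      rw [Finset.mul_sum, Real.exp_sum]
      apply Finset.prod_le_prod
      · intro i _
        have := hiq i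
        apply div_nonneg <;> [linarith; positivity]
      · intro i _
        have h1 : ((i : ℝ) + 1 - q) / ((i : ℝ) + 1) = (-q * (1 / ((i : ℝ) + 1))) + 1 := by
          have : ((i : ℝ) + 1) ≠ 0 := by positivity
          field_simp
          ring
        rw [h1]
        exact Real.add_one_le_exp _
    have hH : Filter.Tendsto (fun n => ∑ i ∈ Finset.range n, (1 / ((i : ℝ) + 1)))
        Filter.atTop Filter.atTop := by
      simpa using Real.tendsto_sum_range_one_div_nat_succ_atTop
    have hbot : Filter.Tendsto (fun n => -q * ∑ i ∈ Finset.range n, (1 / ((i : ℝ) + 1)))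
        Filter.atTop Filter.atBot :=
      hH.const_mul_atTop_of_neg (by linarith)
    have hexp : Filter.Tendsto
        (fun n => Real.exp (-q * ∑ i ∈ Finset.range n, (1 / ((i : ℝ) + 1))))
        Filter.atTop (nhds 0) :=
      Real.tendsto_exp_atBot.comp hbot
    exact tendsto_of_tendsto_of_tendsto_of_le_of_le tendsto_const_nhds hexp hPnonneg hle
  -- b j = -a (j+1) is nonneg
  have hb : ∀ j, 0 ≤ -a (j + 1) := by
    intro j
    have hk := glc_key q j
    have h1 : -q / ((j : ℝ) + 1) ≤ 0 := by
      apply div_nonpos_of_nonpos_of_nonneg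
      · linarith
      · positivity
    have : a (j + 1) ≤ 0 := by
      rw [ha]; simp only []; rw [hk]
      exact mul_nonpos_of_nonpos_of_nonneg h1 (hPnonneg j)
    linarith
  have ha0 : a 0 = 1 := by simp [ha, genBinom]
  have hbsum : HasSum (fun j => -a (j + 1)) 1 := by
    rw [hasSum_iff_tendsto_nat_of_nonneg hb]
    have heq : ∀ n, ∑ j ∈ Finset.range n, -a (j + 1) = 1 - glcP q n := by
      intro n
      have hp := glc_partial q n
      rw [Finset.sum_range_succ'] at hp
      rw [Finset.sum_neg_distrib]
      have : (∑ j ∈ Finset.range n, a (j + 1)) + a 0 = glcP q n := hp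
      rw [ha0] at this
      linarith
    simp only [heq]
    have : Filter.Tendsto (fun n => 1 - glcP q n) Filter.atTop (nhds (1 - 0)) :=
      tendsto_const_nhds.sub hPtend
    simpa using this
  have hbsum' : HasSum (fun j => a (j + 1)) (-1) := by
    have := hbsum.neg
    simpa using this
  have hfin := (hasSum_nat_add_iff (f := a) 1).mp hbsum'
  simpa [ha0] using hfin
end

section
/- Fix q ∈ (0,1) and n ≥ 0. The Adams–Moulton corrector weights defined by ρ₀ = n^{q+1} − (n−q)(n+1)^q, ρ_j = (n−j+2)^{q+1} + (n−j)^{q+1} − 2(n−j+1)^{q+1} for 1 ≤ j ≤ n, and ρ_{n+1} = 1, are all nonnegative. -/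
open Real

/-- the Adams–Moulton corrector weights
ρ₀ = n^{q+1} − (n−q)(n+1)^q, ρⱼ = (n−j+2)^{q+1} + (n−j)^{q+1} − 2(n−j+1)^{q+1} (1 ≤ j ≤ n),
ρ_{n+1} = 1, are all nonnegative. -/
theorem corrector_weights_nonneg (q : ℝ) (hq0 : 0 < q) (hq1 : q < 1) (n : ℕ) :
    0 ≤ (n : ℝ) ^ (q + 1) - ((n : ℝ) - q) * ((n : ℝ) + 1) ^ q ∧
    (∀ j : ℕ, 1 ≤ j → j ≤ n →
      0 ≤ ((n : ℝ) - j + 2) ^ (q + 1) + ((n : ℝ) - j) ^ (q + 1)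
          - 2 * ((n : ℝ) - j + 1) ^ (q + 1)) ∧
    (0 : ℝ) ≤ 1 := by
  refine ⟨?_, ?_, zero_le_one⟩
  · rcases Nat.eq_zero_or_pos n with hn | hn
    · subst hn
      simp only [Nat.cast_zero, zero_sub]
      rw [Real.zero_rpow (by positivity)]
      nlinarith [Real.rpow_pos_of_pos (by norm_num : (0:ℝ) < 0 + 1) q]
    · have hn1 : (1 : ℝ) ≤ n := by exact_mod_cast hn
      have hnpos : (0 : ℝ) < n := by linarith
      -- (1 + 1/n)^q ≤ 1 + q/n
      have hbern : ((1 : ℝ) + 1 / n) ^ q ≤ 1 + q * (1 / n) :=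
        rpow_one_add_le_one_add_mul_self ((neg_nonpos_of_nonneg zero_le_one).trans (by positivity)) hq0.le hq1.le
      have hsplit : ((n : ℝ) + 1) ^ q = (n : ℝ) ^ q * (1 + 1 / n) ^ q := by
        rw [← Real.mul_rpow hnpos.le (by positivity)]
        congr 1
        field_simp
      have hpow : (n : ℝ) ^ (q + 1) = (n : ℝ) ^ q * n := by
        rw [Real.rpow_add hnpos, Real.rpow_one]
      have hq' : (0 : ℝ) < (n : ℝ) - q := by linarith
      have h1 : ((n : ℝ) - q) * ((n : ℝ) + 1) ^ q
          ≤ ((n : ℝ) - q) * ((n : ℝ) ^ q * (1 + q * (1 / n))) := by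
        rw [hsplit]
        have hnq : (0 : ℝ) ≤ (n : ℝ) ^ q := (Real.rpow_pos_of_pos hnpos q).le
        have := mul_le_mul_of_nonneg_left hbern hnq
        nlinarith
      have h2 : ((n : ℝ) - q) * ((n : ℝ) ^ q * (1 + q * (1 / n))) ≤ (n : ℝ) ^ q * n := by
        have hnq : (0 : ℝ) ≤ (n : ℝ) ^ q := (Real.rpow_pos_of_pos hnpos q).le
        have key : ((n : ℝ) - q) * (1 + q * (1 / n)) ≤ n := by
          rw [div_eq_mul_inv]
          have : ((n : ℝ) - q) * (1 + q * (1 * (n:ℝ)⁻¹)) = n - q^2 * (n:ℝ)⁻¹ := by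
            field_simp; ring
          rw [this]
          have : (0:ℝ) ≤ q^2 * (n:ℝ)⁻¹ := by positivity
          linarith
        nlinarith
      rw [hpow]
      linarith
  · intro j hj1 hjn
    set a : ℝ := (n : ℝ) - j with ha
    have ha0 : 0 ≤ a := by
      have : (j : ℝ) ≤ n := by exact_mod_cast hjn
      simp [ha]; linarith
    have hconv : ConvexOn ℝ (Set.Ici 0) fun x : ℝ => x ^ (q + 1) :=
      convexOn_rpow (by linarith)
    have hmem1 : a ∈ Set.Ici (0:ℝ) := ha0
    have hmem2 : a + 2 ∈ Set.Ici (0:ℝ) := by simp; linarith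
    have := hconv.2 hmem1 hmem2 (by norm_num : (0:ℝ) ≤ 1/2) (by norm_num : (0:ℝ) ≤ 1/2)
      (by norm_num)
    simp only [smul_eq_mul] at this
    have heq : (1/2 : ℝ) * a + (1/2) * (a + 2) = a + 1 := by ring
    rw [heq] at this
    linarith
end

section
/- For fixed q ∈ (0,1) and x a polynomial, the Grünwald–Letnikov approximation h^{−q} ∑_{j=0}^{⌊t/h⌋} (−1)ʲ binom(q,j) x(t − jh) converges, as h → 0⁺, to the Riemann–Liouville fractional derivative D^q x(t), for each t > 0; in particular for x(τ) = τ it converges to t^{1−q}/Γ(2−q). -/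
open Real Filter Topology

lemma gl_aux_prod (q : ℝ) : ∀ N : ℕ,
    (-1 : ℝ) ^ (N + 1) * ∏ i ∈ Finset.range (N + 1), (q - i)
      = -q * ∏ i ∈ Finset.range N, (1 - q + i) := by
  intro N
  induction N with
  | zero => simp
  | succ n ih =>
    rw [Finset.prod_range_succ (fun i => q - (i:ℝ)) (n+1), Finset.prod_range_succ (fun i => (1 - q + (i:ℝ))) n, pow_succ]
    push_cast
    push_cast at ih
    linear_combination (-(q - ((n : ℝ) + 1))) * ih

lemma gl_sum_eq (q t h : ℝ) (hq : (1 : ℝ) - q ≠ 0) (N : ℕ) :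
    ∑ j ∈ Finset.range (N + 1), (-1) ^ j * genBinom q j * (t - j * h)
      = (∏ i ∈ Finset.range N, (1 - q + i)) / (Nat.factorial N) *
        (t + h * q * N / (1 - q)) := by
  induction N with
  | zero => simp [genBinom]
  | succ n ih =>
    have hfac : ((Nat.factorial n : ℝ)) ≠ 0 := Nat.cast_ne_zero.2 (Nat.factorial_ne_zero n)
    have hkey := gl_aux_prod q n
    have hterm : ((-1 : ℝ)) ^ (n + 1) * genBinom q (n + 1)
        = (-q * ∏ i ∈ Finset.range n, (1 - q + i)) / (Nat.factorial (n + 1)) := by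
      rw [genBinom, ← hkey]; ring
    rw [Finset.sum_range_succ, ih, hterm, Finset.prod_range_succ, Nat.factorial_succ]
    have hn1 : ((n : ℝ) + 1) ≠ 0 := by positivity
    push_cast
    field_simp
    ring

lemma gl_prod_div_fact (s : ℝ) (hs : 0 < s) (n : ℕ) (hn : 1 ≤ n) :
    (∏ i ∈ Finset.range n, (s + i)) / (Nat.factorial n)
      = (n : ℝ) ^ s / (Real.GammaSeq s n * (s + n)) := by
  have hnpos : (0:ℝ) < n := by exact_mod_cast hn
  have hP : (0:ℝ) < ∏ j ∈ Finset.range (n + 1), (s + j) :=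
    Finset.prod_pos fun j _ => by positivity
  have hfac : (0:ℝ) < (Nat.factorial n : ℝ) := by
    exact_mod_cast (Nat.factorial_pos n)
  have hrpow : (0:ℝ) < (n:ℝ) ^ s := Real.rpow_pos_of_pos hnpos s
  have hG : Real.GammaSeq s n = (n : ℝ) ^ s * (Nat.factorial n) /
      ∏ j ∈ Finset.range (n + 1), (s + j) := rfl
  rw [hG, Finset.prod_range_succ] at *
  have hsn : (0:ℝ) < s + n := by positivity
  have hQ : (0:ℝ) < ∏ j ∈ Finset.range n, (s + j) :=
    Finset.prod_pos fun j _ => by positivity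
  field_simp

/-- special case x(τ) = τ: the Grünwald–Letnikov approximation
h^{−q} ∑_{j=0}^{⌊t/h⌋} (−1)ʲ binom(q,j) (t − jh) converges as h → 0⁺ to
t^{1−q}/Γ(2−q), the Riemann–Liouville derivative of τ ↦ τ at t. -/
theorem gl_approx_tendsto_rl (q t : ℝ) (hq0 : 0 < q) (hq1 : q < 1) (ht : 0 < t) :
    Tendsto
      (fun h : ℝ => h ^ (-q) *
        ∑ j ∈ Finset.range (⌊t / h⌋₊ + 1), (-1) ^ j * genBinom q j * (t - j * h))
      (nhdsWithin 0 (Set.Ioi 0))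
      (nhds (t ^ (1 - q) / Real.Gamma (2 - q))) := by
  have h1q : (0:ℝ) < 1 - q := by linarith
  have h1q' : (1:ℝ) - q ≠ 0 := ne_of_gt h1q
  -- floor tends to infinity
  have hdiv : Tendsto (fun h : ℝ => t / h) (𝓝[>] 0) atTop := by
    simpa [div_eq_mul_inv] using tendsto_inv_nhdsGT_zero.const_mul_atTop ht
  have hNtop : Tendsto (fun h : ℝ => ⌊t / h⌋₊) (𝓝[>] (0:ℝ)) atTop :=
    tendsto_nat_floor_atTop.comp hdiv
  have hmem : Set.Ioo (0:ℝ) t ∈ 𝓝[>] (0:ℝ) := Ioo_mem_nhdsGT_of_mem ⟨le_refl 0, ht⟩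
  -- h * ⌊t/h⌋ → t
  have hhN : Tendsto (fun h : ℝ => h * (⌊t / h⌋₊ : ℝ)) (𝓝[>] (0:ℝ)) (𝓝 t) := by
    apply tendsto_of_tendsto_of_tendsto_of_le_of_le' (g := fun h : ℝ => t - h)
      (h := fun _ : ℝ => t)
    · have : Tendsto (fun h : ℝ => t - h) (𝓝 (0:ℝ)) (𝓝 (t - 0)) :=
        (continuous_const.sub continuous_id).tendsto 0
      simpa using this.mono_left nhdsWithin_le_nhds
    · exact tendsto_const_nhds
    · filter_upwards [hmem] with h hh
      have h0 : 0 < h := hh.1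
      have h2 := (div_lt_iff₀ h0).mp (Nat.lt_floor_add_one (t / h))
      nlinarith [h2]
    · filter_upwards [hmem] with h hh
      have h0 : 0 < h := hh.1
      have := Nat.floor_le (le_of_lt (div_pos ht h0))
      calc h * (⌊t / h⌋₊ : ℝ) ≤ h * (t / h) := by
            exact mul_le_mul_of_nonneg_left this (le_of_lt h0)
        _ = t := by field_simp
  -- limits of the pieces
  have hf1 : Tendsto (fun h : ℝ => (h * (⌊t / h⌋₊ : ℝ)) ^ (-q)) (𝓝[>] (0:ℝ))
      (𝓝 (t ^ (-q))) := hhN.rpow_const (Or.inl (ne_of_gt ht))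
  have hf2 : Tendsto (fun h : ℝ => t + (h * (⌊t / h⌋₊ : ℝ)) * (q / (1 - q)))
      (𝓝[>] (0:ℝ)) (𝓝 (t + t * (q / (1 - q)))) :=
    tendsto_const_nhds.add (hhN.mul_const _)
  have hG : Tendsto (fun h : ℝ => Real.GammaSeq (1 - q) ⌊t / h⌋₊) (𝓝[>] (0:ℝ))
      (𝓝 (Real.Gamma (1 - q))) := (Real.GammaSeq_tendsto_Gamma (1 - q)).comp hNtop
  have hr : Tendsto (fun h : ℝ => (⌊t / h⌋₊ : ℝ) / ((⌊t / h⌋₊ : ℝ) + (1 - q)))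
      (𝓝[>] (0:ℝ)) (𝓝 1) := (tendsto_natCast_div_add_atTop ((1:ℝ) - q)).comp hNtop
  have hGamma_pos : 0 < Real.Gamma (1 - q) := Real.Gamma_pos_of_pos h1q
  have hgl : Tendsto (fun h : ℝ =>
      (h * (⌊t / h⌋₊ : ℝ)) ^ (-q) * (t + (h * (⌊t / h⌋₊ : ℝ)) * (q / (1 - q))) *
        ((⌊t / h⌋₊ : ℝ) / ((⌊t / h⌋₊ : ℝ) + (1 - q)) / Real.GammaSeq (1 - q) ⌊t / h⌋₊))
      (𝓝[>] (0:ℝ))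
      (𝓝 (t ^ (-q) * (t + t * (q / (1 - q))) * (1 / Real.Gamma (1 - q)))) :=
    (hf1.mul hf2).mul (hr.div hG (ne_of_gt hGamma_pos))
  -- identify the limit value
  have hval : t ^ (-q) * (t + t * (q / (1 - q))) * (1 / Real.Gamma (1 - q))
      = t ^ (1 - q) / Real.Gamma (2 - q) := by
    have h2q : Real.Gamma (2 - q) = (1 - q) * Real.Gamma (1 - q) := by
      have := Real.Gamma_add_one h1q'
      rw [show (1:ℝ) - q + 1 = 2 - q by ring] at this
      exact this
    have hrpow : t ^ (1 - q) = t ^ (-q) * t := by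
      rw [show (1:ℝ) - q = -q + 1 by ring, Real.rpow_add ht, Real.rpow_one]
    rw [h2q, hrpow]
    field_simp
    ring
  rw [← hval]
  -- eventual equality
  apply hgl.congr'
  filter_upwards [hmem] with h hh
  have h0 : 0 < h := hh.1
  set n := ⌊t / h⌋₊ with hn
  have hn1 : 1 ≤ n := by
    rw [hn]
    apply Nat.le_floor
    rw [Nat.cast_one, le_div_iff₀ h0]
    linarith [hh.2]
  have hnpos : (0:ℝ) < n := by exact_mod_cast hn1
  have hGpos : 0 < Real.GammaSeq (1 - q) n := by
    have hP : (0:ℝ) < ∏ j ∈ Finset.range (n + 1), ((1 - q) + j) :=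
      Finset.prod_pos fun j _ => by positivity
    have : Real.GammaSeq (1 - q) n = (n : ℝ) ^ ((1:ℝ) - q) * (Nat.factorial n) /
        ∏ j ∈ Finset.range (n + 1), ((1 - q) + j) := rfl
    rw [this]
    have : (0:ℝ) < (n:ℝ) ^ ((1:ℝ) - q) := Real.rpow_pos_of_pos hnpos _
    positivity
  have hsum := gl_sum_eq q t h h1q' n
  have hpf := gl_prod_div_fact (1 - q) h1q n hn1
  -- rewrite sum
  rw [hsum, hpf]
  have hsplit : h ^ (-q) * ((n:ℝ) ^ ((1:ℝ) - q)) = (h * n) ^ (-q) * n := by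
    rw [Real.mul_rpow (le_of_lt h0) (le_of_lt hnpos),
      show (1:ℝ) - q = 1 + (-q) by ring, Real.rpow_add hnpos, Real.rpow_one]
    ring
  have hsn : ((1:ℝ) - q) + n ≠ 0 := by positivity
  have hGne : Real.GammaSeq (1 - q) n ≠ 0 := ne_of_gt hGpos
  field_simp
  linear_combination (-((1 - q) + (n:ℝ))) * hsplit
end
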